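/- Let w ∈ {0,1}^n, let s be the size of the necklace (cyclic rotation orbit) of the remainder word rw(w) and t the size of the necklace of the binary quotient word bqw(w). Then the size of the ρ-orbit of w is s·t. -/
import Mathlib


def rho (m : ℕ) (w : List Bool) : List Bool :=
  let k := (w.takeWhile (fun b => b)).length
  if k < m then w.drop (k + 1) ++ [false] ++ List.replicate k true
  else w.drop m ++ List.replicate m true

/-- One-run encoding: lengths of the maximal runs of ones separated by the zeros,
so that w = 1^{a₀} 0 1^{a₁} 0 ⋯ 0 1^{a_k} has ore w = [a₀, a₁, …, a_k]. -/
def ore (w : List Bool) : List ℕ := (w.splitOn false).map List.length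

/-- Inverse of the one-run encoding: [a₀, …, a_k] ↦ 1^{a₀} 0 1^{a₁} 0 ⋯ 0 1^{a_k}. -/
def oreInv : List ℕ → List Bool
  | [] => []
  | [a] => List.replicate a true
  | a :: rest => List.replicate a true ++ false :: oreInv rest

def addLast (c : ℕ) : List ℕ → List ℕ
  | [] => []
  | [x] => [x + c]
  | x :: y :: xs => x :: addLast c (y :: xs)

def sig (m : ℕ) : List ℕ → List ℕ
  | [] => []
  | a :: rest => if a < m then rest ++ [a] else addLast m ((a - m) :: rest)

def zc (B : List Bool) : ℕ → ℕ
  | 0 => 0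
  | d+1 => zc B d + (if (B.rotate d).head? = some false then 1 else 0)

theorem oreInv_cons (a : ℕ) {rest : List ℕ} (h : rest ≠ []) :
    oreInv (a :: rest) = List.replicate a true ++ false :: oreInv rest := by
  cases rest with
  | nil => exact absurd rfl h
  | cons b rs => rfl

theorem oreInv_append_last {xs : List ℕ} (h : xs ≠ []) (y : ℕ) :
    oreInv (xs ++ [y]) = oreInv xs ++ false :: List.replicate y true := by
  induction xs with
  | nil => exact absurd rfl h
  | cons a rest ih =>
    cases rest with
    | nil => rfl
    | cons b rs =>
      rw [List.cons_append, oreInv_cons a (by simp), oreInv_cons a (by simp),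
        ih (by simp)]
      simp

theorem oreInv_addLast {xs : List ℕ} (h : xs ≠ []) (c : ℕ) :
    oreInv (addLast c xs) = oreInv xs ++ List.replicate c true := by
  induction xs with
  | nil => exact absurd rfl h
  | cons a rest ih =>
    cases rest with
    | nil =>
      show List.replicate (a + c) true = List.replicate a true ++ List.replicate c true
      rw [List.replicate_add]
    | cons b rs =>
      rw [show addLast c (a :: b :: rs) = a :: addLast c (b :: rs) from rfl,
        oreInv_cons a (by cases rs <;> simp [addLast]),
        oreInv_cons a (by simp), ih (by simp)]
      simp

theorem splitOn_replicate (a : ℕ) :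
    (List.replicate a true).splitOn false = [List.replicate a true] := by
  induction a with
  | zero => simp [List.splitOn]
  | succ k ih =>
    rw [List.replicate_succ]
    rw [List.splitOn, List.splitOnP_cons] at *
    simp at *
    rw [ih]
    rfl

theorem splitOn_rep_append (a : ℕ) (v : List Bool) :
    (List.replicate a true ++ false :: v).splitOn false
      = List.replicate a true :: v.splitOn false := by
  induction a with
  | zero => simp [List.splitOn, List.splitOnP_cons]
  | succ k ih =>
    rw [List.replicate_succ, List.cons_append]
    rw [List.splitOn, List.splitOnP_cons] at *
    simp at *
    rw [ih]
    rfl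

theorem ore_oreInv {q : List ℕ} (h : q ≠ []) : ore (oreInv q) = q := by
  induction q with
  | nil => exact absurd rfl h
  | cons a rest ih =>
    cases rest with
    | nil => simp [oreInv, ore, splitOn_replicate]
    | cons b rs =>
      rw [oreInv_cons a (by simp), ore, splitOn_rep_append]
      simpa [ore] using ih (by simp)

theorem oreInv_surj (w : List Bool) : ∃ q, q ≠ [] ∧ oreInv q = w := by
  induction w with
  | nil => exact ⟨[0], by simp, rfl⟩
  | cons x v ih =>
    obtain ⟨q, hq, rfl⟩ := ih
    cases x with
    | true =>
      obtain ⟨a, rest, rfl⟩ := List.exists_cons_of_ne_nil hq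
      refine ⟨(a+1) :: rest, by simp, ?_⟩
      cases rest with
      | nil => simp [oreInv, List.replicate_succ]
      | cons b rs =>
        rw [oreInv_cons (a+1) (by simp), oreInv_cons a (by simp), List.replicate_succ]
        simp
    | false =>
      exact ⟨0 :: q, by simp, by rw [oreInv_cons 0 hq]; simp⟩

theorem oreInv_ore (w : List Bool) : oreInv (ore w) = w := by
  obtain ⟨q, hq, rfl⟩ := oreInv_surj w
  rw [ore_oreInv hq]

theorem ore_ne_nil (w : List Bool) : ore w ≠ [] := by
  obtain ⟨q, hq, rfl⟩ := oreInv_surj w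
  rw [ore_oreInv hq]; exact hq

theorem length_oreInv (q : List ℕ) : (oreInv q).length = q.sum + q.length - 1 := by
  induction q with
  | nil => rfl
  | cons a rest ih =>
    cases rest with
    | nil => simp [oreInv]
    | cons b rs =>
      rw [oreInv_cons a (by simp)]
      simp only [List.length_append, List.length_replicate, List.length_cons, ih,
        List.sum_cons, List.length_cons]
      omega

theorem count_false_oreInv (q : List ℕ) : (oreInv q).count false = q.length - 1 := by
  induction q with
  | nil => rfl
  | cons a rest ih =>
    cases rest with
    | nil => simp [oreInv, List.count_replicate]
    | cons b rs =>
      rw [oreInv_cons a (by simp)]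
      simp only [List.count_append, List.count_replicate, List.count_cons, ih]
      simp

theorem takeWhile_rep_app (a : ℕ) (v : List Bool) :
    (List.replicate a true ++ false :: v).takeWhile (fun b => b) = List.replicate a true := by
  induction a with
  | zero => simp [List.takeWhile_cons]
  | succ k ih => simp only [List.replicate_succ, List.cons_append, List.takeWhile_cons]; simp [ih]

theorem takeWhile_rep (a : ℕ) :
    (List.replicate a true).takeWhile (fun b => b) = List.replicate a true := by
  induction a with
  | zero => rfl
  | succ k ih => simp only [List.replicate_succ, List.takeWhile_cons]; simp [ih]

theorem drop_rep_app (a : ℕ) (v : List Bool) :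
    (List.replicate a true ++ v).drop a = v := by
  simpa using List.drop_left (List.replicate a true) v

theorem addLast_cons_cons (c a b : ℕ) (rs : List ℕ) :
    addLast c (a :: b :: rs) = a :: addLast c (b :: rs) := rfl

theorem addLast_ne_nil {c : ℕ} {q : List ℕ} (h : q ≠ []) : addLast c q ≠ [] := by
  obtain ⟨a, rest, rfl⟩ := List.exists_cons_of_ne_nil h
  cases rest <;> simp [addLast]

theorem length_addLast (c : ℕ) (q : List ℕ) : (addLast c q).length = q.length := by
  induction q with
  | nil => rfl
  | cons a rest ih =>
    cases rest with
    | nil => rfl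
    | cons b rs => rw [addLast_cons_cons]; simpa using ih

theorem sum_addLast (c : ℕ) {q : List ℕ} (h : q ≠ []) : (addLast c q).sum = q.sum + c := by
  induction q with
  | nil => exact absurd rfl h
  | cons a rest ih =>
    cases rest with
    | nil => simp [addLast]
    | cons b rs =>
      rw [addLast_cons_cons]
      simp only [List.sum_cons, ih (by simp)]
      omega

theorem sig_ne_nil {m : ℕ} {q : List ℕ} (h : q ≠ []) : sig m q ≠ [] := by
  obtain ⟨a, rest, rfl⟩ := List.exists_cons_of_ne_nil h
  rw [sig]
  split
  · simp
  · exact addLast_ne_nil (by simp)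

theorem rho_oreInv (m : ℕ) {q : List ℕ} (hq : q ≠ [])
    (hlen : m ≤ (oreInv q).length) : rho m (oreInv q) = oreInv (sig m q) := by
  obtain ⟨a, rest, rfl⟩ := List.exists_cons_of_ne_nil hq
  rcases eq_or_ne rest [] with rfl | hr
  · -- q = [a], oreInv = replicate a true, so a ≥ m (since length = a ≥ m)
    have ha : m ≤ a := by simpa [oreInv] using hlen
    have hma : ¬ a < m := by omega
    show rho m (List.replicate a true) = _
    rw [rho, sig]
    simp only [takeWhile_rep, List.length_replicate, if_neg hma]
    show (List.replicate a true).drop m ++ List.replicate m true = oreInv [a - m + m]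
    rw [show a = m + (a - m) by omega, List.replicate_add, drop_rep_app]
    show _ = List.replicate (m + (a-m) - m + m) true
    rw [show m + (a-m) - m + m = (a - m) + m by omega, List.replicate_add]
  · rw [oreInv_cons a hr, rho]
    simp only [takeWhile_rep_app, List.length_replicate]
    by_cases ham : a < m
    · rw [if_pos ham, sig, if_pos ham,
        show List.replicate a true ++ false :: oreInv rest
          = (List.replicate a true ++ [false]) ++ oreInv rest by simp,
        show a + 1 = (List.replicate a true ++ [false]).length by simp,
        List.drop_left, oreInv_append_last hr]
      simp
    · rw [if_neg ham, sig, if_neg ham,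
        show List.replicate a true = List.replicate m true ++ List.replicate (a-m) true by
          rw [← List.replicate_add]; congr 1; omega,
        List.append_assoc, drop_rep_app,
        show addLast m ((a-m) :: rest) = (a-m) :: addLast m rest by
          obtain ⟨b, rs, rfl⟩ := List.exists_cons_of_ne_nil hr; rfl,
        oreInv_cons _ (addLast_ne_nil hr), oreInv_addLast hr]
      simp

theorem length_oreInv_sig (m : ℕ) {q : List ℕ} (hq : q ≠ []) :
    (oreInv (sig m q)).length = (oreInv q).length := by
  obtain ⟨a, rest, rfl⟩ := List.exists_cons_of_ne_nil hq
  rw [length_oreInv, length_oreInv, sig]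
  split
  · simp; omega
  · rw [sum_addLast _ (by simp), length_addLast]
    simp; omega

theorem map_mod_addLast (m : ℕ) (q : List ℕ) :
    (addLast m q).map (fun a => a % m) = q.map (fun a => a % m) := by
  induction q with
  | nil => rfl
  | cons a rest ih =>
    cases rest with
    | nil => simp [addLast, Nat.add_mod_right]
    | cons b rs => rw [addLast_cons_cons]; simpa using ih

theorem map_div_addLast (m : ℕ) (hm : 1 ≤ m) (q : List ℕ) :
    (addLast m q).map (fun a => a / m) = addLast 1 (q.map (fun a => a / m)) := by
  induction q with
  | nil => rfl
  | cons a rest ih =>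
    cases rest with
    | nil => simp [addLast, Nat.add_div_right _ hm]
    | cons b rs => rw [addLast_cons_cons]; simp only [List.map_cons] at *; rw [ih]; rfl

theorem rotate_one_cons {α : Type*} (x : α) (xs : List α) :
    (x :: xs).rotate 1 = xs ++ [x] := by
  simpa using List.rotate_cons_succ xs x 0

theorem sig_step (m : ℕ) (hm : 1 ≤ m) {l : List ℕ} (hl : l ≠ [])
    (hB : oreInv (l.map (fun a => a / m)) ≠ []) :
    (sig m l).map (fun a => a % m)
      = (l.map (fun a => a % m)).rotate
          (if (oreInv (l.map (fun a => a / m))).head? = some false then 1 else 0)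
    ∧ oreInv ((sig m l).map (fun a => a / m)) = (oreInv (l.map (fun a => a / m))).rotate 1 := by
  obtain ⟨a, rest, rfl⟩ := List.exists_cons_of_ne_nil hl
  by_cases ham : a < m
  · have ha0 : a / m = 0 := Nat.div_eq_of_lt ham
    rcases eq_or_ne rest [] with rfl | hr
    · exfalso; apply hB; simp [ha0, oreInv]
    · have hrm : rest.map (fun a => a / m) ≠ [] := by simpa using hr
      have hBval : oreInv ((a :: rest).map (fun a => a / m))
          = false :: oreInv (rest.map (fun a => a / m)) := by
        rw [List.map_cons, ha0, oreInv_cons 0 hrm]; simp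
      rw [sig, if_pos ham, hBval]
      have hif : (if (false :: oreInv (rest.map (fun a => a / m))).head? = some false
          then 1 else 0) = 1 := by simp
      constructor
      · rw [hif, List.map_cons, rotate_one_cons, List.map_append]
        simp
      · rw [List.map_append, List.map_cons, List.map_nil, ha0,
          oreInv_append_last hrm, rotate_one_cons]
        simp
  · have ham' : m ≤ a := le_of_not_gt ham
    have hq1 : 1 ≤ a / m := (Nat.one_le_div_iff hm).2 ham'
    obtain ⟨j, hj⟩ : ∃ j, a / m = j + 1 := ⟨a / m - 1, by omega⟩
    have hsub : (a - m) / m = j := by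
      have : a / m = (a - m) / m + 1 := by
        conv_lhs => rw [show a = m + (a - m) by omega]
        rw [Nat.add_div_left _ hm]
      omega
    have hmod : (a - m) % m = a % m := by
      conv_rhs => rw [show a = (a - m) + m by omega, Nat.add_mod_right]
    rw [sig, if_neg ham]
    have hhead : (oreInv ((a :: rest).map (fun a => a / m))).head? = some true := by
      rcases eq_or_ne rest [] with rfl | hr
      · simp only [List.map_cons, List.map_nil]
        show (oreInv [a/m]).head? = _
        rw [show oreInv [a/m] = List.replicate (a/m) true from rfl, hj,
          List.replicate_succ]
        rfl
      · rw [List.map_cons, oreInv_cons _ (by simpa using hr), hj,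
          List.replicate_succ]
        rfl
    rw [hhead]
    constructor
    · rw [map_mod_addLast]
      simp [hmod, List.rotate_zero]
    · rw [map_div_addLast m hm]
      rcases eq_or_ne rest [] with rfl | hr
      · simp only [List.map_cons, List.map_nil]
        show oreInv [(a - m)/m + 1] = (oreInv [a/m]).rotate 1
        rw [hsub, hj]
        show List.replicate (j+1) true = (List.replicate (j+1) true).rotate 1
        rw [List.rotate_replicate]
      · have hrm : rest.map (fun a => a / m) ≠ [] := by simpa using hr
        rw [List.map_cons, hsub,
          show addLast 1 (j :: rest.map (fun a => a / m))
            = j :: addLast 1 (rest.map (fun a => a / m)) by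
            obtain ⟨x, xs, hx⟩ := List.exists_cons_of_ne_nil hrm; rw [hx]; rfl,
          oreInv_cons _ (addLast_ne_nil hrm), oreInv_addLast hrm,
          List.map_cons, oreInv_cons _ hrm, hj]
        rw [show List.replicate (j+1) true = true :: List.replicate j true from rfl,
          List.cons_append, rotate_one_cons]
        simp

theorem sig_iter (m : ℕ) (hm : 1 ≤ m) {l : List ℕ} (hl : l ≠ [])
    (hB : oreInv (l.map (fun a => a / m)) ≠ []) (d : ℕ) :
    ((sig m)^[d] l).map (fun a => a % m)
        = (l.map (fun a => a % m)).rotate (zc (oreInv (l.map (fun a => a / m))) d)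
    ∧ oreInv (((sig m)^[d] l).map (fun a => a / m))
        = (oreInv (l.map (fun a => a / m))).rotate d
    ∧ (sig m)^[d] l ≠ [] := by
  induction d with
  | zero => simp [zc, hl]
  | succ d ih =>
    obtain ⟨ih1, ih2, ih3⟩ := ih
    have hB' : oreInv (((sig m)^[d] l).map (fun a => a / m)) ≠ [] := by
      rw [ih2]; simpa [List.rotate_eq_nil_iff] using hB
    obtain ⟨st1, st2⟩ := sig_step m hm ih3 hB'
    refine ⟨?_, ?_, ?_⟩
    · rw [Function.iterate_succ_apply', st1, ih1, ih2, List.rotate_rotate]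
      rfl
    · rw [Function.iterate_succ_apply', st2, ih2, List.rotate_rotate]
    · rw [Function.iterate_succ_apply']
      exact sig_ne_nil ih3

theorem eq_of_map_mod_div (m : ℕ) {l l' : List ℕ}
    (h1 : l.map (fun a => a % m) = l'.map (fun a => a % m))
    (h2 : l.map (fun a => a / m) = l'.map (fun a => a / m)) : l = l' := by
  induction l generalizing l' with
  | nil => cases l' <;> simp_all
  | cons a rest ih =>
    cases l' with
    | nil => simp_all
    | cons b rs =>
      simp only [List.map_cons, List.cons.injEq] at h1 h2 ⊢
      obtain ⟨h1a, h1b⟩ := h1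
      obtain ⟨h2a, h2b⟩ := h2
      refine ⟨?_, ih h1b h2b⟩
      rw [← Nat.div_add_mod a m, ← Nat.div_add_mod b m, h1a, h2a]

theorem zc_zero (B : List Bool) : zc B 0 = 0 := rfl

theorem zc_succ (B : List Bool) (d : ℕ) :
    zc B (d+1) = zc B d + (if (B.rotate d).head? = some false then 1 else 0) := rfl

theorem rotate_iterate {α : Type*} (B : List α) (d : ℕ) :
    (fun y : List α => y.rotate 1)^[d] B = B.rotate d := by
  induction d with
  | zero => simp
  | succ d ih => rw [Function.iterate_succ_apply', ih]; simp [List.rotate_rotate]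

theorem least_dvd {α : Type*} (f : α → α) (x : α) (e : ℕ)
    (he : IsLeast {d | 0 < d ∧ f^[d] x = x} e) {d : ℕ} (hd : f^[d] x = x) : e ∣ d := by
  rcases Nat.eq_zero_or_pos d with rfl | hd0
  · exact dvd_zero e
  have hepos : 0 < e := he.1.1
  have hper : ∀ q, f^[e * q] x = x := by
    intro q
    induction q with
    | zero => simp
    | succ q ih =>
      rw [Nat.mul_succ, Function.iterate_add_apply, he.1.2, ih]
  have hr : f^[d % e] x = x := by
    conv_lhs => rw [show x = f^[e * (d / e)] x from (hper _).symm]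
    rw [← Function.iterate_add_apply, Nat.mod_add_div, hd]
  rcases Nat.eq_zero_or_pos (d % e) with h0 | hpos
  · exact Nat.dvd_of_mod_eq_zero h0
  · have : e ≤ d % e := he.2 ⟨hpos, hr⟩
    have : d % e < e := Nat.mod_lt _ hepos
    omega

theorem rotate_least_dvd {α : Type*} {B : List α} {e : ℕ}
    (he : IsLeast {d | 0 < d ∧ B.rotate d = B} e) {d : ℕ} (hd : B.rotate d = B) : e ∣ d := by
  have hiter : ∀ d, (fun y : List α => y.rotate 1)^[d] B = B ↔ B.rotate d = B :=
    fun d => by rw [rotate_iterate]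
  exact least_dvd _ B e
    ⟨⟨he.1.1, (hiter e).2 he.1.2⟩, fun x hx => he.2 ⟨hx.1, (hiter x).1 hx.2⟩⟩
    ((hiter d).2 hd)

theorem rotate_of_dvd {α : Type*} {B : List α} {e d : ℕ} (h : B.rotate e = B) (hd : e ∣ d) :
    B.rotate d = B := by
  obtain ⟨q, rfl⟩ := hd
  induction q with
  | zero => simp
  | succ q ih => rw [Nat.mul_succ, ← List.rotate_rotate, ih, h]

theorem zc_add_period {B : List Bool} {t : ℕ} (ht : B.rotate t = B) (d : ℕ) :
    zc B (d + t) = zc B d + zc B t := by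
  induction d with
  | zero => simp [zc_zero]
  | succ d ih =>
    rw [show d + 1 + t = (d + t) + 1 by omega, zc_succ, ih, zc_succ]
    have : B.rotate (d + t) = B.rotate d := by
      rw [show d + t = t + d by omega, ← List.rotate_rotate, ht]
    rw [this]
    ring

theorem zc_mul {B : List Bool} {t : ℕ} (ht : B.rotate t = B) (j : ℕ) :
    zc B (t * j) = j * zc B t := by
  induction j with
  | zero => simp [zc_zero]
  | succ j ih => rw [Nat.mul_succ, zc_add_period ht, ih]; ring

theorem zc_length {B : List Bool} : zc B B.length = B.count false := by
  have key : ∀ d ≤ B.length, zc B d = (B.take d).count false := by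
    intro d hd
    induction d with
    | zero => simp [zc_zero]
    | succ d ih =>
      have hdl : d < B.length := hd
      rw [zc_succ, ih (le_of_lt hdl), List.take_succ, List.head?_rotate hdl,
        List.getElem?_eq_getElem hdl]
      cases hb : B[d] <;> simp [List.count_append, hb]
  simpa using key B.length le_rfl

/-- The ρ-orbit size of w is the product of the necklace sizes of its remainder
word rw(w) and its binary quotient word bqw(w). -/
theorem stmt10 (m n : ℕ) (hm : 1 ≤ m) (hmn : m ≤ n) (w : List Bool) (hw : w.length = n)
    (s t p : ℕ)
    (hs : IsLeast {d | 0 < d ∧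
      ((ore w).map (fun a => a % m)).rotate d = (ore w).map (fun a => a % m)} s)
    (ht : IsLeast {d | 0 < d ∧
      (oreInv ((ore w).map (fun a => a / m))).rotate d
        = oreInv ((ore w).map (fun a => a / m))} t)
    (hp : IsLeast {d | 0 < d ∧ (rho m)^[d] w = w} p) :
    p = s * t := by
  set l := ore w with hldef
  set R := l.map (fun a => a % m) with hRdef
  set B := oreInv (l.map (fun a => a / m)) with hBdef
  have hl : l ≠ [] := ore_ne_nil w
  have hwl : oreInv l = w := oreInv_ore w
  have hB : B ≠ [] := by
    obtain ⟨a, rest, hlr⟩ := List.exists_cons_of_ne_nil hl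
    rcases eq_or_ne rest [] with rfl | hr
    · have ha : a = n := by
        rw [← hw, ← hwl, hlr]
        show a = (List.replicate a true).length
        simp
      have h1 : 1 ≤ a / m := (Nat.one_le_div_iff hm).2 (by omega)
      rw [hBdef, hlr]
      simp only [List.map_cons, List.map_nil]
      show List.replicate (a / m) true ≠ []
      simp
      omega
    · rw [hBdef, hlr, List.map_cons, oreInv_cons _ (by simpa using hr)]
      simp
  -- iterates of rho correspond to iterates of sig
  have iter : ∀ d, (rho m)^[d] w = oreInv ((sig m)^[d] l) ∧ (sig m)^[d] l ≠ [] ∧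
      (oreInv ((sig m)^[d] l)).length = n := by
    intro d
    induction d with
    | zero => exact ⟨by simp [hwl], by simpa using hl, by simp [hwl, hw]⟩
    | succ d ih =>
      obtain ⟨h1, h2, h3⟩ := ih
      refine ⟨?_, by rw [Function.iterate_succ_apply']; exact sig_ne_nil h2, ?_⟩
      · rw [Function.iterate_succ_apply', h1, rho_oreInv m h2 (h3 ▸ hmn),
          Function.iterate_succ_apply']
      · rw [Function.iterate_succ_apply', length_oreInv_sig m h2, h3]
  have charP : ∀ d, ((rho m)^[d] w = w ↔ (sig m)^[d] l = l) := by
    intro d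
    obtain ⟨h1, h2, _⟩ := iter d
    rw [h1, ← hwl]
    constructor
    · intro h
      have h' := congrArg ore h
      rwa [ore_oreInv h2, ore_oreInv hl] at h'
    · intro h; rw [h]
  have charSig : ∀ d, ((sig m)^[d] l = l ↔ (R.rotate (zc B d) = R ∧ B.rotate d = B)) := by
    intro d
    obtain ⟨s1, s2, s3⟩ := sig_iter m hm hl (hBdef ▸ hB) d
    rw [← hBdef] at s1 s2
    constructor
    · intro h
      rw [h] at s1 s2
      exact ⟨s1.symm, s2.symm⟩
    · rintro ⟨hR, hBr⟩
      apply eq_of_map_mod_div m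
      · rw [s1, hR]
      · have hmapne : ((sig m)^[d] l).map (fun a => a / m) ≠ [] := by
          intro hh
          exact s3 (by simpa using hh)
        have hmapne' : l.map (fun a => a / m) ≠ [] := by
          intro hh
          exact hl (by simpa using hh)
        have heq : oreInv (((sig m)^[d] l).map (fun a => a / m))
            = oreInv (l.map (fun a => a / m)) := by rw [s2, hBr]
        have h2 := congrArg ore heq
        rwa [ore_oreInv hmapne, ore_oreInv hmapne'] at h2
  -- arithmetic facts
  have spos : 0 < s := hs.1.1
  have tpos : 0 < t := ht.1.1
  have hsR : ∀ d, R.rotate d = R → s ∣ d := by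
    intro d hd
    exact rotate_least_dvd (B := R) (e := s) hs hd
  have htB : ∀ d, B.rotate d = B → t ∣ d := by
    intro d hd
    exact rotate_least_dvd (B := B) (e := t) ht hd
  have hBt : B.rotate t = B := ht.1.2
  have hRs : R.rotate s = R := hs.1.2
  have hsk : s ∣ R.length := hsR _ (List.rotate_length R)
  obtain ⟨u, hu⟩ := htB _ (List.rotate_length B)
  have hcount : B.count false = l.length - 1 := by
    rw [hBdef, count_false_oreInv]
    simp
  have hzL : u * zc B t = l.length - 1 := by
    rw [← zc_mul hBt, ← hu, zc_length, hcount]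
  have hlpos : 0 < l.length := List.length_pos_iff.2 hl
  have hRlen : R.length = l.length := by rw [hRdef]; simp
  have hcop : Nat.Coprime s (zc B t) := by
    have h1 : s ∣ (l.length - 1) + 1 := by
      rw [show l.length - 1 + 1 = l.length by omega, ← hRlen]; exact hsk
    have h2 : zc B t ∣ l.length - 1 := ⟨u, by rw [← hzL]; ring⟩
    have hg1 : Nat.gcd s (zc B t) ∣ (l.length - 1) + 1 :=
      dvd_trans (Nat.gcd_dvd_left _ _) h1
    have hg2 : Nat.gcd s (zc B t) ∣ l.length - 1 :=
      dvd_trans (Nat.gcd_dvd_right _ _) h2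
    have : Nat.gcd s (zc B t) ∣ 1 := by
      have := Nat.dvd_sub hg1 hg2
      simpa using this
    exact Nat.dvd_one.mp this
  have charD : ∀ d, ((sig m)^[d] l = l ↔ s * t ∣ d) := by
    intro d
    rw [charSig d]
    constructor
    · rintro ⟨hR, hBr⟩
      obtain ⟨c, rfl⟩ := htB _ hBr
      rw [zc_mul hBt] at hR
      have hsc : s ∣ c := (Nat.Coprime.dvd_of_dvd_mul_right hcop) (hsR _ hR)
      obtain ⟨c', rfl⟩ := hsc
      exact ⟨c', by ring⟩
    · rintro ⟨c, rfl⟩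
      refine ⟨?_, rotate_of_dvd hBt ⟨s * c, by ring⟩⟩
      rw [show s * t * c = t * (s * c) by ring, zc_mul hBt]
      exact rotate_of_dvd hRs ⟨c * zc B t, by ring⟩
  have hmem : 0 < s * t ∧ (rho m)^[s * t] w = w :=
    ⟨Nat.mul_pos spos tpos, (charP _).2 ((charD _).2 ⟨1, (Nat.mul_one _).symm⟩)⟩
  have hdvd : s * t ∣ p := (charD p).1 ((charP p).1 hp.1.2)
  exact le_antisymm (hp.2 hmem) (Nat.le_of_dvd hp.1.1 hdvd)
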